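/- Let H be a separable complex Hilbert space, C a conjugation on H, and T a C-normal bounded linear operator with Cartesian decomposition T = A + iB, where A = (T + CT*C)/2 is C-symmetric and B = (T − CT*C)/(2i) is C-skew-symmetric. Then the self-commutator satisfies ‖T*T − TT*‖ ≤ 2‖A‖·min(‖A − A*‖, ‖A + A*‖) + 2‖B‖·min(‖B − B*‖, ‖B + B*‖). -/

import Mathlib

open scoped InnerProductSpace
open ContinuousLinearMap TopologicalSpace

/-- A conjugation on a complex Hilbert space: an anti-linear, involutive map
satisfying `⟪C x, C y⟫ = ⟪y, x⟫`. -/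
def Conjugation {K : Type*} [NormedAddCommGroup K] [InnerProductSpace ℂ K] (C : K → K) : Prop :=
  (∀ (a : ℂ) (x y : K), C (a • x + y) = (starRingEnd ℂ) a • C x + C y) ∧
  (∀ x, C (C x) = x) ∧
  (∀ x y : K, ⟪C x, C y⟫_ℂ = ⟪y, x⟫_ℂ)

/-- `T` is `C`-normal: `C T*T C = T T*` (pointwise). -/
def CNormal {K : Type*} [NormedAddCommGroup K] [InnerProductSpace ℂ K] [CompleteSpace K]
    (C : K → K) (T : K →L[ℂ] K) : Prop :=
  ∀ x, C (adjoint T (T (C x))) = T (adjoint T x)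

/-- Self-commutator norm inequality for a `C`-normal operator `T` with Cartesian
decomposition `T = A + iB`:
`‖T*T − TT*‖ ≤ 2‖A‖ min(‖A − A*‖, ‖A + A*‖) + 2‖B‖ min(‖B − B*‖, ‖B + B*‖)`. -/
theorem stmt_17 {H : Type*} [NormedAddCommGroup H] [InnerProductSpace ℂ H] [CompleteSpace H]
    [SeparableSpace H]
    (C : H → H) (hC : Conjugation C)
    (T A B : H →L[ℂ] H) (hT : CNormal C T)
    (hA : ∀ x, A x = (2 : ℂ)⁻¹ • (T x + C (adjoint T (C x))))
    (hB : ∀ x, B x = (2 * Complex.I)⁻¹ • (T x - C (adjoint T (C x)))) :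
    ‖adjoint T * T - T * adjoint T‖ ≤
      2 * ‖A‖ * min ‖A - adjoint A‖ ‖A + adjoint A‖ +
      2 * ‖B‖ * min ‖B - adjoint B‖ ‖B + adjoint B‖ := by
  obtain ⟨hCl, hCi, hCinner⟩ := hC
  set S := adjoint T with hS
  set A' := adjoint A with hA'
  set B' := adjoint B with hB'
  -- basic antilinearity facts
  have hC0 : C 0 = 0 := by
    have h := hCl 1 0 0; simpa using h
  -- Cartesian decomposition, pointwise
  have hTpt : ∀ x, T x = A x + Complex.I • B x := by
    intro x
    rw [hA x, hB x]
    match_scalars <;> (field_simp; try ring)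
  have hKpt : ∀ x, C (S (C x)) = A x - Complex.I • B x := by
    intro x
    rw [hA x, hB x]
    match_scalars <;> (field_simp; try ring)
  have hKC : ∀ x, S (C x) = C (A x - Complex.I • B x) := by
    intro x; rw [← hKpt x, hCi]
  -- operator form and adjoint
  have hTop : T = A + Complex.I • B := by
    ext x; simpa using hTpt x
  have hSpt : ∀ x, S x = A' x - Complex.I • B' x := by
    have : S = A' + (starRingEnd ℂ) Complex.I • B' := by
      rw [hS, hTop, map_add, map_smulₛₗ]
    intro x
    rw [this]
    simp [Complex.conj_I, sub_eq_add_neg, neg_smul]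
  -- the "L" operator  C T C  in terms of adjoints
  have hLpt : ∀ y, C (T (C y)) = A' y + Complex.I • B' y := by
    intro y
    apply ext_inner_left ℂ
    intro x
    have h1 : ⟪x, C (T (C y))⟫_ℂ = ⟪T (C y), C x⟫_ℂ := by
      conv_lhs => rw [← hCi x]
      rw [hCinner]
    have h2 : ⟪C y, S (C x)⟫_ℂ = ⟪T (C y), C x⟫_ℂ := adjoint_inner_right T (C y) (C x)
    rw [h1, ← h2, hKC x, hCinner]
    rw [inner_sub_left, inner_smul_left, inner_add_right, inner_smul_right,
      ← adjoint_inner_right A, ← adjoint_inner_right B, Complex.conj_I, ← hA', ← hB']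
    ring
  have hLC : ∀ y, T (C y) = C (A' y + Complex.I • B' y) := by
    intro y; rw [← hLpt y, hCi]
  -- first commutation relation : A B' = B A'
  have hrel1 : ∀ x, A (B' x) = B (A' x) := by
    intro x
    have e0 := hT x
    rw [hLC x, hKpt (A' x + Complex.I • B' x), hSpt x, map_sub, map_smul,
      hTpt (A' x), hTpt (B' x)] at e0
    simp only [map_add, map_smul, map_sub] at e0
    have e1 : (2*Complex.I) • A (B' x) = (2*Complex.I) • B (A' x) := by
      linear_combination (norm := module) e0
    exact smul_right_injective H (by simp [Complex.I_ne_zero]) e1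
  -- second commutation relation : A' B = B' A
  have hrel2 : ∀ x, A' (B x) = B' (A x) := by
    intro x
    have e0 := hT (C x)
    rw [hCi x] at e0
    have e0' : S (T x) = C (T (S (C x))) := by rw [← e0, hCi]
    rw [hKC x, hLpt (A x - Complex.I • B x), hTpt x, map_add, map_smul] at e0'
    simp only [map_add, map_smul, map_sub] at e0'
    have e1 : (2*Complex.I) • A' (B x) = (2*Complex.I) • B' (A x) := by
      rw [hSpt (A x), hSpt (B x)] at e0'
      linear_combination (norm := module) e0'
    exact smul_right_injective H (by simp [Complex.I_ne_zero]) e1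
  -- key operator identity
  have key : S * T - T * S = (A' * A - A * A') + (B' * B - B * B') := by
    ext x
    simp only [sub_apply, add_apply, mul_apply_eq_comp]
    rw [hTpt x, hSpt x]
    simp only [map_add, map_sub, map_smul]
    rw [hSpt (A x), hSpt (B x), hTpt (A' x), hTpt (B' x)]
    simp only [smul_sub, smul_add, smul_smul, Complex.I_mul_I, neg_smul, one_smul]
    rw [hrel1 x, hrel2 x]
    module
  -- norm bounds for each commutator
  have comm_le : ∀ (X D : H →L[ℂ] H), ‖D * X - X * D‖ ≤ 2 * ‖X‖ * ‖D‖ := by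
    intro X D
    calc ‖D * X - X * D‖ ≤ ‖D * X‖ + ‖X * D‖ := norm_sub_le _ _
      _ ≤ ‖D‖ * ‖X‖ + ‖X‖ * ‖D‖ := add_le_add (norm_mul_le _ _) (norm_mul_le _ _)
      _ = 2 * ‖X‖ * ‖D‖ := by ring
  have bnd : ∀ (X : H →L[ℂ] H),
      ‖adjoint X * X - X * adjoint X‖ ≤ 2 * ‖X‖ * min ‖X - adjoint X‖ ‖X + adjoint X‖ := by
    intro X
    have e1 : adjoint X * X - X * adjoint X = (adjoint X - X) * X - X * (adjoint X - X) := by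
      noncomm_ring
    have e2 : adjoint X * X - X * adjoint X = (adjoint X + X) * X - X * (adjoint X + X) := by
      noncomm_ring
    rcases le_total ‖X - adjoint X‖ ‖X + adjoint X‖ with h | h
    · rw [min_eq_left h, e1]
      calc ‖(adjoint X - X) * X - X * (adjoint X - X)‖ ≤ 2 * ‖X‖ * ‖adjoint X - X‖ :=
            comm_le X _
        _ = 2 * ‖X‖ * ‖X - adjoint X‖ := by rw [norm_sub_rev]
    · rw [min_eq_right h, e2]
      calc ‖(adjoint X + X) * X - X * (adjoint X + X)‖ ≤ 2 * ‖X‖ * ‖adjoint X + X‖ :=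
            comm_le X _
        _ = 2 * ‖X‖ * ‖X + adjoint X‖ := by rw [add_comm (adjoint X) X]
  calc ‖S * T - T * S‖ = ‖(A' * A - A * A') + (B' * B - B * B')‖ := by rw [key]
    _ ≤ ‖A' * A - A * A'‖ + ‖B' * B - B * B'‖ := norm_add_le _ _
    _ ≤ 2 * ‖A‖ * min ‖A - A'‖ ‖A + A'‖ + 2 * ‖B‖ * min ‖B - B'‖ ‖B + B'‖ :=
        add_le_add (bnd A) (bnd B)
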